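/- Uniform convergence of the LAGO estimating function (equation (5)). In the two-stage LAGO setup, sup_{β ∈ B} ‖U_n(β) − u(β)‖ → 0 in probability as n → ∞ (the supremum over the compact set B is a measurable random variable because β ↦ U_n(β) − u(β) is continuous). -/

import Mathlib

open MeasureTheory ProbabilityTheory Filter
open scoped RealInnerProductSpace BigOperators NNReal Topology ENNReal

noncomputable section

/-- Concatenate `(1, a, z)` into a design vector in `ℝ^(1+P+Q)`. -/
def designVec {P Q : ℕ} (a : EuclideanSpace ℝ (Fin P)) (z : EuclideanSpace ℝ (Fin Q)) :
    EuclideanSpace ℝ (Fin (1 + P + Q)) :=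
  (EuclideanSpace.equiv (Fin (1 + P + Q)) ℝ).symm
    (Fin.append (Fin.append ![(1 : ℝ)] ((EuclideanSpace.equiv (Fin P) ℝ) a))
      ((EuclideanSpace.equiv (Fin Q) ℝ) z))

/-- The two-stage LAGO setup. -/
structure LagoSetup (Ω : Type) [MeasurableSpace Ω] (Pr : Measure Ω) (J1 J2 P Q : ℕ) where
  hJ1 : 1 ≤ J1
  hJ2 : 1 ≤ J2
  hP : 1 ≤ P
  hQ : 1 ≤ Q
  /-- stage-1 interventions -/
  a1 : Fin J1 → EuclideanSpace ℝ (Fin P)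
  /-- stage-1 center covariates -/
  z1 : Fin J1 → EuclideanSpace ℝ (Fin Q)
  /-- limit stage-2 interventions -/
  a2 : Fin J2 → EuclideanSpace ℝ (Fin P)
  /-- stage-2 center covariates -/
  z2 : Fin J2 → EuclideanSpace ℝ (Fin Q)
  /-- random stage-2 interventions, for each total sample size `n` -/
  A2 : ℕ → Fin J2 → Ω → EuclideanSpace ℝ (Fin P)
  measA2 : ∀ n j, Measurable (A2 n j)
  /-- per-center sample sizes, stage 1 -/
  n1 : ℕ → Fin J1 → ℕ
  /-- per-center sample sizes, stage 2 -/
  n2 : ℕ → Fin J2 → ℕ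
  sum_sizes : ∀ n, (∑ j, n1 n j) + (∑ j, n2 n j) = n
  α1 : Fin J1 → ℝ
  α2 : Fin J2 → ℝ
  α1_pos : ∀ j, 0 < α1 j
  α2_pos : ∀ j, 0 < α2 j
  α1_lim : ∀ j, Tendsto (fun n : ℕ => (n1 n j : ℝ) / n) atTop (𝓝 (α1 j))
  α2_lim : ∀ j, Tendsto (fun n : ℕ => (n2 n j : ℝ) / n) atTop (𝓝 (α2 j))
  /-- the mean function (inverse link) -/
  h : ℝ → ℝ
  h_smooth : ContDiff ℝ 2 h
  /-- the (compact) parameter space -/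
  B : Set (EuclideanSpace ℝ (Fin (1 + P + Q)))
  B_compact : IsCompact B
  /-- the true parameter -/
  βstar : EuclideanSpace ℝ (Fin (1 + P + Q))
  βstar_mem : βstar ∈ B
  /-- stage-1 errors -/
  ε1 : Fin J1 → ℕ → Ω → ℝ
  /-- realized stage-2 errors -/
  ε2n : ℕ → Fin J2 → ℕ → Ω → ℝ
  /-- coupled i.i.d. stage-2 error arrays -/
  ε2 : Fin J2 → ℕ → Ω → ℝ
  meas_ε1 : ∀ j i, Measurable (ε1 j i)
  meas_ε2n : ∀ n j i, Measurable (ε2n n j i)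
  meas_ε2 : ∀ j i, Measurable (ε2 j i)
  /-- stage-1 error variances σ₁²(j) -/
  var1 : Fin J1 → ℝ
  /-- stage-2 error variances σ₂²(j) -/
  var2 : Fin J2 → ℝ
  /-- Assumption 3: convergence in probability of the stage-2 interventions -/
  A2_tendsto : ∀ j, TendstoInMeasure Pr (fun n => A2 n j) atTop (fun _ => a2 j)
  /-- Assumption 4: all interventions and errors take values in one compact set -/
  bound : ℝ
  A2_bdd : ∀ n j ω, ‖A2 n j ω‖ ≤ bound
  ε1_bdd : ∀ j i ω, |ε1 j i ω| ≤ bound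
  ε2n_bdd : ∀ n j i ω, |ε2n n j i ω| ≤ bound
  ε2_bdd : ∀ j i ω, |ε2 j i ω| ≤ bound
  /-- identical distribution within each error array -/
  ε1_ident : ∀ j i, IdentDistrib (ε1 j i) (ε1 j 0) Pr Pr
  ε2_ident : ∀ j i, IdentDistrib (ε2 j i) (ε2 j 0) Pr Pr
  ε1_mean : ∀ j i, ∫ ω, ε1 j i ω ∂Pr = 0
  ε2_mean : ∀ j i, ∫ ω, ε2 j i ω ∂Pr = 0
  ε1_var : ∀ j i, ∫ ω, (ε1 j i ω) ^ 2 ∂Pr = var1 j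
  ε2_var : ∀ j i, ∫ ω, (ε2 j i ω) ^ 2 ∂Pr = var2 j
  /-- all ε¹ and ε² variables are mutually independent -/
  ε_indep : iIndepFun
      (Sum.elim (fun p : Fin J1 × ℕ => fun ω => ε1 p.1 p.2 ω)
        (fun p : Fin J2 × ℕ => fun ω => ε2 p.1 p.2 ω)) Pr
  /-- the coupled ε² arrays are independent of (ε¹, (A_j^{(2,n)})_{j,n}) -/
  ε2_indep_rest : IndepFun
      (fun ω => (fun p : Fin J2 × ℕ => ε2 p.1 p.2 ω))
      (fun ω => ((fun p : Fin J1 × ℕ => ε1 p.1 p.2 ω),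
        (fun q : ℕ × Fin J2 => A2 q.1 q.2 ω))) Pr
  /-- Assumption 5: joint-law equality between realized and coupled errors -/
  jointLaw : ∀ n,
    Measure.map (fun ω => ((fun p : Fin J1 × ℕ => ε1 p.1 p.2 ω),
        (fun j => A2 n j ω), (fun p : Fin J2 × ℕ => ε2n n p.1 p.2 ω))) Pr
    = Measure.map (fun ω => ((fun p : Fin J1 × ℕ => ε1 p.1 p.2 ω),
        (fun j => A2 n j ω), (fun p : Fin J2 × ℕ => ε2 p.1 p.2 ω))) Pr

namespace LagoSetup

variable {Ω : Type} [MeasurableSpace Ω] {Pr : Measure Ω} {J1 J2 P Q : ℕ}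

/-- stage-1 design vectors x_j^{(1)} = (1, a_j^{(1)}, z_j^{(1)}) -/
def x1v (S : LagoSetup Ω Pr J1 J2 P Q) (j : Fin J1) : EuclideanSpace ℝ (Fin (1 + P + Q)) :=
  designVec (S.a1 j) (S.z1 j)

/-- limit stage-2 design vectors x_j^{(2)} = (1, a_j^{(2)}, z_j^{(2)}) -/
def x2v (S : LagoSetup Ω Pr J1 J2 P Q) (j : Fin J2) : EuclideanSpace ℝ (Fin (1 + P + Q)) :=
  designVec (S.a2 j) (S.z2 j)

/-- random stage-2 design vectors X_j^{(2,n)} = (1, A_j^{(2,n)}, z_j^{(2)}) -/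
def X2v (S : LagoSetup Ω Pr J1 J2 P Q) (n : ℕ) (j : Fin J2) (ω : Ω) :
    EuclideanSpace ℝ (Fin (1 + P + Q)) :=
  designVec (S.A2 n j ω) (S.z2 j)

/-- The LAGO estimating function U_n(β). -/
def U (S : LagoSetup Ω Pr J1 J2 P Q) (n : ℕ) (β : EuclideanSpace ℝ (Fin (1 + P + Q))) (ω : Ω) :
    EuclideanSpace ℝ (Fin (1 + P + Q)) :=
  (n : ℝ)⁻¹ •
    ((∑ j, ∑ i ∈ Finset.range (S.n1 n j),
        (deriv S.h ⟪β, S.x1v j⟫ *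
          (S.h ⟪S.βstar, S.x1v j⟫ + S.ε1 j i ω - S.h ⟪β, S.x1v j⟫)) • S.x1v j) +
      (∑ j, ∑ i ∈ Finset.range (S.n2 n j),
        (deriv S.h ⟪β, S.X2v n j ω⟫ *
          (S.h ⟪S.βstar, S.X2v n j ω⟫ + S.ε2n n j i ω - S.h ⟪β, S.X2v n j ω⟫)) •
          S.X2v n j ω))

/-- The deterministic limit u(β) of the estimating function. -/
def uLim (S : LagoSetup Ω Pr J1 J2 P Q) (β : EuclideanSpace ℝ (Fin (1 + P + Q))) :
    EuclideanSpace ℝ (Fin (1 + P + Q)) :=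
  (∑ j, (S.α1 j * deriv S.h ⟪β, S.x1v j⟫ *
      (S.h ⟪S.βstar, S.x1v j⟫ - S.h ⟪β, S.x1v j⟫)) • S.x1v j) +
    (∑ j, (S.α2 j * deriv S.h ⟪β, S.x2v j⟫ *
      (S.h ⟪S.βstar, S.x2v j⟫ - S.h ⟪β, S.x2v j⟫)) • S.x2v j)

/-- The limiting Jacobian matrix J(β*). -/
def Jmat (S : LagoSetup Ω Pr J1 J2 P Q) : Matrix (Fin (1 + P + Q)) (Fin (1 + P + Q)) ℝ :=
  Matrix.of fun p q =>
    (∑ j, S.α1 j * (deriv S.h ⟪S.βstar, S.x1v j⟫) ^ 2 * (S.x1v j p * S.x1v j q)) +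
      (∑ j, S.α2 j * (deriv S.h ⟪S.βstar, S.x2v j⟫) ^ 2 * (S.x2v j p * S.x2v j q))

/-- The limiting score covariance matrix V(β*). -/
def Vmat (S : LagoSetup Ω Pr J1 J2 P Q) : Matrix (Fin (1 + P + Q)) (Fin (1 + P + Q)) ℝ :=
  Matrix.of fun p q =>
    (∑ j, S.α1 j * S.var1 j * (deriv S.h ⟪S.βstar, S.x1v j⟫) ^ 2 * (S.x1v j p * S.x1v j q)) +
      (∑ j, S.α2 j * S.var2 j * (deriv S.h ⟪S.βstar, S.x2v j⟫) ^ 2 * (S.x2v j p * S.x2v j q))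

end LagoSetup

/-- `μ` is the centered Gaussian law on ℝ^d with covariance matrix `C`
(characterized via all one-dimensional projections, Cramér–Wold). -/
def IsCenteredGaussianLaw {d : ℕ} (μ : Measure (EuclideanSpace ℝ (Fin d)))
    (C : Matrix (Fin d) (Fin d) ℝ) : Prop :=
  IsProbabilityMeasure μ ∧
    ∀ l : EuclideanSpace ℝ (Fin d),
      Measure.map (fun v => ⟪l, v⟫) μ =
        gaussianReal 0 (Real.toNNReal (∑ p, ∑ q, l p * C p q * l q))

/-- Convergence in distribution: weak convergence of the laws. -/
def TendstoInDistribution {Ω : Type} [MeasurableSpace Ω] {E : Type*}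
    [MeasurableSpace E] [TopologicalSpace E]
    (X : ℕ → Ω → E) (Pr : Measure Ω) (μ : Measure E) : Prop :=
  ∀ f : BoundedContinuousFunction E ℝ,
    Tendsto (fun n => ∫ ω, f (X n ω) ∂Pr) atTop (𝓝 (∫ x, f x ∂μ))

section AuxLemmas

variable {E' : Type*} [NormedAddCommGroup E'] [NormedSpace ℝ E']

lemma lago_step1 (x : E') (D A C α : ℝ) (m n : ℕ) (ε : ℕ → ℝ) :
    (n : ℝ)⁻¹ • (∑ i ∈ Finset.range m, (D * (A + ε i - C)) • x) - (α * D * (A - C)) • x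
      = ((m / n - α) : ℝ) • ((D * (A - C)) • x)
        + ((n : ℝ)⁻¹ * ∑ i ∈ Finset.range m, ε i) • (D • x) := by
  have e : ∀ i ∈ Finset.range m,
      (D * (A + ε i - C)) • x = (D * (A - C)) • x + (ε i) • (D • x) := by
    intro i _
    match_scalars
    ring
  rw [Finset.sum_congr rfl e, Finset.sum_add_distrib, Finset.sum_const, ← Finset.sum_smul,
    Finset.card_range, ← Nat.cast_smul_eq_nsmul ℝ m]
  match_scalars
  ring

lemma lago_step2 (x y : E') (D A C D' A' C' α : ℝ) (m n : ℕ) (ε : ℕ → ℝ) :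
    (n : ℝ)⁻¹ • (∑ i ∈ Finset.range m, (D * (A + ε i - C)) • x) - (α * D' * (A' - C')) • y
      = ((m / n - α) : ℝ) • ((D * (A - C)) • x)
        + α • ((D * (A - C)) • x - (D' * (A' - C')) • y)
        + ((n : ℝ)⁻¹ * ∑ i ∈ Finset.range m, ε i) • (D • x) := by
  have h := lago_step1 x D A C α m n ε
  have h2 : (n : ℝ)⁻¹ • (∑ i ∈ Finset.range m, (D * (A + ε i - C)) • x)
      - (α * D' * (A' - C')) • y
      = ((n : ℝ)⁻¹ • (∑ i ∈ Finset.range m, (D * (A + ε i - C)) • x)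
          - (α * D * (A - C)) • x)
        + ((α * D * (A - C)) • x - (α * D' * (A' - C')) • y) := by abel
  rw [h2, h]
  match_scalars <;> ring

variable {Ω : Type} [MeasurableSpace Ω] {Pr : Measure Ω}

lemma lago_cheb [IsProbabilityMeasure Pr] (X : ℕ → Ω → ℝ) (b : ℝ)
    (hm : ∀ i, Measurable (X i)) (hb : ∀ i ω, |X i ω| ≤ b)
    (hmean : ∀ i, ∫ ω, X i ω ∂Pr = 0)
    (hind : ∀ i k, i ≠ k → IndepFun (X i) (X k) Pr)
    (m : ℕ → ℕ) (hmn : ∀ n, m n ≤ n) {δ : ℝ} (hδ : 0 < δ) :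
    Tendsto (fun n : ℕ => Pr {ω | δ ≤ (n : ℝ)⁻¹ * |∑ i ∈ Finset.range (m n), X i ω|})
      atTop (𝓝 0) := by
  have Int : ∀ i, Integrable (X i) Pr := fun i =>
    (integrable_const b).mono' (hm i).aestronglyMeasurable
      (ae_of_all _ fun ω => by simpa [Real.norm_eq_abs] using hb i ω)
  have IntP : ∀ i k, Integrable (fun ω => X i ω * X k ω) Pr := by
    intro i k
    refine (integrable_const (b * b)).mono' ((hm i).mul (hm k)).aestronglyMeasurable
      (ae_of_all _ fun ω => ?_)
    rw [Real.norm_eq_abs, abs_mul]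
    exact mul_le_mul (hb i ω) (hb k ω) (abs_nonneg _) ((abs_nonneg _).trans (hb i ω))
  have hcross : ∀ i k, i ≠ k → ∫ ω, X i ω * X k ω ∂Pr = 0 := by
    intro i k h
    have h2 : ∫ ω, X i ω * X k ω ∂Pr = (∫ ω, X i ω ∂Pr) * ∫ ω, X k ω ∂Pr :=
      IndepFun.integral_fun_mul_eq_mul_integral (hind i k h) (Int i).1 (Int k).1
    rw [h2, hmean i, zero_mul]
  have key : ∀ n : ℕ, 1 ≤ n →
      Pr {ω | δ ≤ (n : ℝ)⁻¹ * |∑ i ∈ Finset.range (m n), X i ω|}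
        ≤ ENNReal.ofReal (b * b / (δ * δ) * (n : ℝ)⁻¹) := by
    intro n hn
    set S : Ω → ℝ := fun ω => ∑ i ∈ Finset.range (m n), X i ω with hS
    have hnpos : (0 : ℝ) < n := by exact_mod_cast hn
    have hnne : (n : ℝ) ≠ 0 := ne_of_gt hnpos
    have expand : (fun ω => S ω * S ω)
        = fun ω => ∑ i ∈ Finset.range (m n), ∑ k ∈ Finset.range (m n), X i ω * X k ω := by
      funext ω
      rw [hS]
      exact Finset.sum_mul_sum _ _ _ _
    have ISS : Integrable (fun ω => S ω * S ω) Pr := by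
      rw [expand]
      exact integrable_finset_sum _ fun i _ => integrable_finset_sum _ fun k _ => IntP i k
    have hS2 : ∫ ω, S ω * S ω ∂Pr ≤ (n : ℝ) * (b * b) := by
      have h1 : ∫ ω, S ω * S ω ∂Pr
          = ∑ i ∈ Finset.range (m n), ∑ k ∈ Finset.range (m n), ∫ ω, X i ω * X k ω ∂Pr := by
        rw [show (fun ω => S ω * S ω) = _ from expand]
        rw [integral_finset_sum _ fun i _ => integrable_finset_sum _ fun k _ => IntP i k]
        exact Finset.sum_congr rfl fun i _ => integral_finset_sum _ fun k _ => IntP i k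
      have h2 : ∀ i ∈ Finset.range (m n),
          ∑ k ∈ Finset.range (m n), ∫ ω, X i ω * X k ω ∂Pr = ∫ ω, X i ω * X i ω ∂Pr := by
        intro i hi
        exact Finset.sum_eq_single_of_mem i hi fun k _ hk => hcross i k (Ne.symm hk)
      have h3 : ∀ i, ∫ ω, X i ω * X i ω ∂Pr ≤ b * b := by
        intro i
        have hpt : ∀ ω, X i ω * X i ω ≤ b * b := fun ω => by
          calc X i ω * X i ω = |X i ω| * |X i ω| := (abs_mul_abs_self _).symm
          _ ≤ b * b := mul_self_le_mul_self (abs_nonneg _) (hb i ω)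
        calc ∫ ω, X i ω * X i ω ∂Pr ≤ ∫ _ω, b * b ∂Pr :=
              integral_mono (IntP i i) (integrable_const _) hpt
        _ = b * b := by simp
      calc ∫ ω, S ω * S ω ∂Pr = ∑ i ∈ Finset.range (m n), ∫ ω, X i ω * X i ω ∂Pr := by
            rw [h1]; exact Finset.sum_congr rfl h2
      _ ≤ ∑ _i ∈ Finset.range (m n), (b * b) := Finset.sum_le_sum fun i _ => h3 i
      _ = (m n : ℝ) * (b * b) := by rw [Finset.sum_const, Finset.card_range, nsmul_eq_mul]
      _ ≤ (n : ℝ) * (b * b) := by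
            have hbb : (0 : ℝ) ≤ b * b := mul_self_nonneg b
            have hmncast : (m n : ℝ) ≤ (n : ℝ) := by exact_mod_cast hmn n
            nlinarith
    set ε₀ : ℝ := ((n : ℝ) * δ) * ((n : ℝ) * δ) with hε₀
    have hε₀pos : 0 < ε₀ := by positivity
    have incl : {ω | δ ≤ (n : ℝ)⁻¹ * |S ω|} ⊆ {ω | ε₀ ≤ S ω * S ω} := by
      intro ω hω
      simp only [Set.mem_setOf_eq] at hω ⊢
      have h1 : (n : ℝ) * δ ≤ |S ω| := by
        have := mul_le_mul_of_nonneg_left hω (le_of_lt hnpos)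
        rwa [← mul_assoc, mul_inv_cancel₀ hnne, one_mul] at this
      calc ε₀ ≤ |S ω| * |S ω| := mul_self_le_mul_self (by positivity) h1
      _ = S ω * S ω := abs_mul_abs_self _
    have markov := mul_meas_ge_le_integral_of_nonneg
      (ae_of_all Pr fun ω => mul_self_nonneg (S ω)) ISS ε₀
    have htoReal : (Pr {ω | ε₀ ≤ S ω * S ω}).toReal ≤ b * b / (δ * δ) * (n : ℝ)⁻¹ := by
      have h1 : (Pr {ω | ε₀ ≤ S ω * S ω}).toReal ≤ ((n : ℝ) * (b * b)) / ε₀ := by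
        rw [le_div_iff₀ hε₀pos]
        calc (Pr {ω | ε₀ ≤ S ω * S ω}).toReal * ε₀
            = ε₀ * (Pr {ω | ε₀ ≤ S ω * S ω}).toReal := mul_comm _ _
        _ ≤ ∫ ω, S ω * S ω ∂Pr := markov
        _ ≤ (n : ℝ) * (b * b) := hS2
      have h2 : ((n : ℝ) * (b * b)) / ε₀ = b * b / (δ * δ) * (n : ℝ)⁻¹ := by
        rw [hε₀]
        field_simp
      rwa [h2] at h1
    calc Pr {ω | δ ≤ (n : ℝ)⁻¹ * |S ω|} ≤ Pr {ω | ε₀ ≤ S ω * S ω} := measure_mono incl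
    _ = ENNReal.ofReal ((Pr {ω | ε₀ ≤ S ω * S ω}).toReal) :=
        (ENNReal.ofReal_toReal (measure_ne_top Pr _)).symm
    _ ≤ ENNReal.ofReal (b * b / (δ * δ) * (n : ℝ)⁻¹) := ENNReal.ofReal_le_ofReal htoReal
  have hupper : Tendsto (fun n : ℕ => ENNReal.ofReal (b * b / (δ * δ) * (n : ℝ)⁻¹))
      atTop (𝓝 0) := by
    have h1 : Tendsto (fun n : ℕ => b * b / (δ * δ) * (n : ℝ)⁻¹) atTop (𝓝 0) := by
      simpa using tendsto_const_nhds.mul (tendsto_inv_atTop_nhds_zero_nat (𝕜 := ℝ))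
    simpa using ENNReal.tendsto_ofReal h1
  refine tendsto_of_tendsto_of_tendsto_of_le_of_le' tendsto_const_nhds hupper
    (Eventually.of_forall fun n => zero_le) ?_
  filter_upwards [eventually_ge_atTop 1] with n hn
  exact key n hn

end AuxLemmas
section AuxLemmas2

lemma lago_designVec_continuous {P Q : ℕ} (z : EuclideanSpace ℝ (Fin Q)) :
    Continuous fun a : EuclideanSpace ℝ (Fin P) => designVec a z := by
  unfold designVec
  refine ((EuclideanSpace.equiv (Fin (1 + P + Q)) ℝ).symm.continuous).comp ?_
  refine continuous_pi fun i => ?_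
  induction i using Fin.addCases with
  | left i =>
    simp only [Fin.append_left]
    induction i using Fin.addCases with
    | left i0 => simp only [Fin.append_left]; exact continuous_const
    | right i0 =>
      simp only [Fin.append_right]
      exact (continuous_apply _).comp (EuclideanSpace.equiv (Fin P) ℝ).continuous
  | right i => simp only [Fin.append_right]; exact continuous_const

variable {Ω : Type} [MeasurableSpace Ω] {Pr : Measure Ω} {J1 J2 P Q : ℕ}

/-- g1: stage-1 drift term -/
def g1fn (S : LagoSetup Ω Pr J1 J2 P Q) (j : Fin J1)
    (β : EuclideanSpace ℝ (Fin (1 + P + Q))) : EuclideanSpace ℝ (Fin (1 + P + Q)) :=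
  (deriv S.h ⟪β, S.x1v j⟫ * (S.h ⟪S.βstar, S.x1v j⟫ - S.h ⟪β, S.x1v j⟫)) • S.x1v j

def h1fn (S : LagoSetup Ω Pr J1 J2 P Q) (j : Fin J1)
    (β : EuclideanSpace ℝ (Fin (1 + P + Q))) : EuclideanSpace ℝ (Fin (1 + P + Q)) :=
  (deriv S.h ⟪β, S.x1v j⟫) • S.x1v j

def g2fn (S : LagoSetup Ω Pr J1 J2 P Q) (j : Fin J2)
    (p : EuclideanSpace ℝ (Fin P) × EuclideanSpace ℝ (Fin (1 + P + Q))) :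
    EuclideanSpace ℝ (Fin (1 + P + Q)) :=
  (deriv S.h ⟪p.2, designVec p.1 (S.z2 j)⟫ *
      (S.h ⟪S.βstar, designVec p.1 (S.z2 j)⟫ - S.h ⟪p.2, designVec p.1 (S.z2 j)⟫)) •
    designVec p.1 (S.z2 j)

def h2fn (S : LagoSetup Ω Pr J1 J2 P Q) (j : Fin J2)
    (p : EuclideanSpace ℝ (Fin P) × EuclideanSpace ℝ (Fin (1 + P + Q))) :
    EuclideanSpace ℝ (Fin (1 + P + Q)) :=
  (deriv S.h ⟪p.2, designVec p.1 (S.z2 j)⟫) • designVec p.1 (S.z2 j)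

lemma lago_hderiv_cont (S : LagoSetup Ω Pr J1 J2 P Q) : Continuous (deriv S.h) :=
  S.h_smooth.continuous_deriv (by norm_num)

lemma g1fn_continuous (S : LagoSetup Ω Pr J1 J2 P Q) (j : Fin J1) :
    Continuous (g1fn S j) := by
  have h1 : Continuous fun β : EuclideanSpace ℝ (Fin (1 + P + Q)) => (⟪β, S.x1v j⟫ : ℝ) :=
    continuous_id.inner continuous_const
  exact (((lago_hderiv_cont S).comp h1).mul
    (continuous_const.sub (S.h_smooth.continuous.comp h1))).smul continuous_const

lemma h1fn_continuous (S : LagoSetup Ω Pr J1 J2 P Q) (j : Fin J1) :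
    Continuous (h1fn S j) := by
  have h1 : Continuous fun β : EuclideanSpace ℝ (Fin (1 + P + Q)) => (⟪β, S.x1v j⟫ : ℝ) :=
    continuous_id.inner continuous_const
  exact ((lago_hderiv_cont S).comp h1).smul continuous_const

lemma g2fn_continuous (S : LagoSetup Ω Pr J1 J2 P Q) (j : Fin J2) :
    Continuous (g2fn S j) := by
  have hdv : Continuous fun p : EuclideanSpace ℝ (Fin P) × EuclideanSpace ℝ (Fin (1 + P + Q)) =>
      designVec p.1 (S.z2 j) := (lago_designVec_continuous _).comp continuous_fst
  have h1 : Continuous fun p : EuclideanSpace ℝ (Fin P) × EuclideanSpace ℝ (Fin (1 + P + Q)) =>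
      (⟪p.2, designVec p.1 (S.z2 j)⟫ : ℝ) := continuous_snd.inner hdv
  have h2 : Continuous fun p : EuclideanSpace ℝ (Fin P) × EuclideanSpace ℝ (Fin (1 + P + Q)) =>
      (⟪S.βstar, designVec p.1 (S.z2 j)⟫ : ℝ) := continuous_const.inner hdv
  exact (((lago_hderiv_cont S).comp h1).mul
    ((S.h_smooth.continuous.comp h2).sub (S.h_smooth.continuous.comp h1))).smul hdv

lemma h2fn_continuous (S : LagoSetup Ω Pr J1 J2 P Q) (j : Fin J2) :
    Continuous (h2fn S j) := by
  have hdv : Continuous fun p : EuclideanSpace ℝ (Fin P) × EuclideanSpace ℝ (Fin (1 + P + Q)) =>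
      designVec p.1 (S.z2 j) := (lago_designVec_continuous _).comp continuous_fst
  have h1 : Continuous fun p : EuclideanSpace ℝ (Fin P) × EuclideanSpace ℝ (Fin (1 + P + Q)) =>
      (⟪p.2, designVec p.1 (S.z2 j)⟫ : ℝ) := continuous_snd.inner hdv
  exact ((lago_hderiv_cont S).comp h1).smul hdv

lemma lago_transfer (S : LagoSetup Ω Pr J1 J2 P Q) (n : ℕ)
    (F : ((Fin J2 × ℕ) → ℝ) → ℝ) (hF : Measurable F) (δ : ℝ) :
    Pr {ω | δ ≤ F fun p => S.ε2n n p.1 p.2 ω} = Pr {ω | δ ≤ F fun p => S.ε2 p.1 p.2 ω} := by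
  have hε1m : Measurable fun ω => (fun p : Fin J1 × ℕ => S.ε1 p.1 p.2 ω) :=
    measurable_pi_lambda _ fun p => S.meas_ε1 p.1 p.2
  have hA2m : Measurable fun ω => (fun j => S.A2 n j ω) :=
    measurable_pi_lambda _ fun j => S.measA2 n j
  have hε2nm : Measurable fun ω => (fun p : Fin J2 × ℕ => S.ε2n n p.1 p.2 ω) :=
    measurable_pi_lambda _ fun p => S.meas_ε2n n p.1 p.2
  have hε2m : Measurable fun ω => (fun p : Fin J2 × ℕ => S.ε2 p.1 p.2 ω) :=
    measurable_pi_lambda _ fun p => S.meas_ε2 p.1 p.2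
  have hbig1 : Measurable fun ω => ((fun p : Fin J1 × ℕ => S.ε1 p.1 p.2 ω),
      (fun j => S.A2 n j ω), (fun p : Fin J2 × ℕ => S.ε2n n p.1 p.2 ω)) :=
    hε1m.prodMk (hA2m.prodMk hε2nm)
  have hbig2 : Measurable fun ω => ((fun p : Fin J1 × ℕ => S.ε1 p.1 p.2 ω),
      (fun j => S.A2 n j ω), (fun p : Fin J2 × ℕ => S.ε2 p.1 p.2 ω)) :=
    hε1m.prodMk (hA2m.prodMk hε2m)
  have hset : MeasurableSet {t : ((Fin J1 × ℕ) → ℝ) × ((Fin J2) → EuclideanSpace ℝ (Fin P))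
      × ((Fin J2 × ℕ) → ℝ) | δ ≤ F t.2.2} :=
    measurableSet_le measurable_const (hF.comp (measurable_snd.comp measurable_snd))
  have h1 := Measure.map_apply (μ := Pr) hbig1 hset
  have h2 := Measure.map_apply (μ := Pr) hbig2 hset
  calc Pr {ω | δ ≤ F fun p => S.ε2n n p.1 p.2 ω}
      = Measure.map (fun ω => ((fun p : Fin J1 × ℕ => S.ε1 p.1 p.2 ω),
          (fun j => S.A2 n j ω), (fun p : Fin J2 × ℕ => S.ε2n n p.1 p.2 ω))) Pr
          {t | δ ≤ F t.2.2} := h1.symm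
    _ = Measure.map (fun ω => ((fun p : Fin J1 × ℕ => S.ε1 p.1 p.2 ω),
          (fun j => S.A2 n j ω), (fun p : Fin J2 × ℕ => S.ε2 p.1 p.2 ω))) Pr
          {t | δ ≤ F t.2.2} := by rw [S.jointLaw n]
    _ = Pr {ω | δ ≤ F fun p => S.ε2 p.1 p.2 ω} := h2

lemma lago_U_decomp (S : LagoSetup Ω Pr J1 J2 P Q) (n : ℕ)
    (β : EuclideanSpace ℝ (Fin (1 + P + Q))) (ω : Ω) :
    S.U n β ω - S.uLim β =
      (∑ j, (((S.n1 n j : ℝ) / n - S.α1 j) • g1fn S j β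
          + ((n : ℝ)⁻¹ * ∑ i ∈ Finset.range (S.n1 n j), S.ε1 j i ω) • h1fn S j β))
      + ∑ j, (((S.n2 n j : ℝ) / n - S.α2 j) • g2fn S j (S.A2 n j ω, β)
          + S.α2 j • (g2fn S j (S.A2 n j ω, β) - g2fn S j (S.a2 j, β))
          + ((n : ℝ)⁻¹ * ∑ i ∈ Finset.range (S.n2 n j), S.ε2n n j i ω)
              • h2fn S j (S.A2 n j ω, β)) := by
  have hA : ∀ j : Fin J1,
      (n : ℝ)⁻¹ • (∑ i ∈ Finset.range (S.n1 n j),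
          (deriv S.h ⟪β, S.x1v j⟫ *
            (S.h ⟪S.βstar, S.x1v j⟫ + S.ε1 j i ω - S.h ⟪β, S.x1v j⟫)) • S.x1v j)
        - (S.α1 j * deriv S.h ⟪β, S.x1v j⟫ *
            (S.h ⟪S.βstar, S.x1v j⟫ - S.h ⟪β, S.x1v j⟫)) • S.x1v j
      = ((S.n1 n j : ℝ) / n - S.α1 j) • g1fn S j β
        + ((n : ℝ)⁻¹ * ∑ i ∈ Finset.range (S.n1 n j), S.ε1 j i ω) • h1fn S j β := fun j =>
    lago_step1 (S.x1v j) _ _ _ _ _ _ _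
  have hB : ∀ j : Fin J2,
      (n : ℝ)⁻¹ • (∑ i ∈ Finset.range (S.n2 n j),
          (deriv S.h ⟪β, S.X2v n j ω⟫ *
            (S.h ⟪S.βstar, S.X2v n j ω⟫ + S.ε2n n j i ω - S.h ⟪β, S.X2v n j ω⟫)) • S.X2v n j ω)
        - (S.α2 j * deriv S.h ⟪β, S.x2v j⟫ *
            (S.h ⟪S.βstar, S.x2v j⟫ - S.h ⟪β, S.x2v j⟫)) • S.x2v j
      = ((S.n2 n j : ℝ) / n - S.α2 j) • g2fn S j (S.A2 n j ω, β)
          + S.α2 j • (g2fn S j (S.A2 n j ω, β) - g2fn S j (S.a2 j, β))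
          + ((n : ℝ)⁻¹ * ∑ i ∈ Finset.range (S.n2 n j), S.ε2n n j i ω)
              • h2fn S j (S.A2 n j ω, β) := fun j =>
    lago_step2 (S.X2v n j ω) (S.x2v j) _ _ _ _ _ _ _ _ _ _
  calc S.U n β ω - S.uLim β
      = (∑ j, ((n : ℝ)⁻¹ • (∑ i ∈ Finset.range (S.n1 n j),
            (deriv S.h ⟪β, S.x1v j⟫ *
              (S.h ⟪S.βstar, S.x1v j⟫ + S.ε1 j i ω - S.h ⟪β, S.x1v j⟫)) • S.x1v j)
          - (S.α1 j * deriv S.h ⟪β, S.x1v j⟫ *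
              (S.h ⟪S.βstar, S.x1v j⟫ - S.h ⟪β, S.x1v j⟫)) • S.x1v j))
        + ∑ j, ((n : ℝ)⁻¹ • (∑ i ∈ Finset.range (S.n2 n j),
            (deriv S.h ⟪β, S.X2v n j ω⟫ *
              (S.h ⟪S.βstar, S.X2v n j ω⟫ + S.ε2n n j i ω - S.h ⟪β, S.X2v n j ω⟫))
                • S.X2v n j ω)
          - (S.α2 j * deriv S.h ⟪β, S.x2v j⟫ *
              (S.h ⟪S.βstar, S.x2v j⟫ - S.h ⟪β, S.x2v j⟫)) • S.x2v j) := by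
        simp only [LagoSetup.U, LagoSetup.uLim, Finset.sum_sub_distrib]
        rw [smul_add, Finset.smul_sum, Finset.smul_sum]
        abel
    _ = _ := by
        rw [Finset.sum_congr rfl fun j _ => hA j, Finset.sum_congr rfl fun j _ => hB j]

end AuxLemmas2
/-- **Uniform convergence of the LAGO estimating function (equation (5)):**
sup_{β ∈ B} ‖U_n(β) − u(β)‖ → 0 in probability. -/
theorem lago_uniform_convergence
    {Ω : Type} [MeasurableSpace Ω] {Pr : Measure Ω} [IsProbabilityMeasure Pr]
    {J1 J2 P Q : ℕ} (S : LagoSetup Ω Pr J1 J2 P Q) :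
    TendstoInMeasure Pr
      (fun n ω => sSup ((fun β => ‖S.U n β ω - S.uLim β‖) '' S.B))
      atTop (fun _ => (0 : ℝ)) := by
  rw [tendstoInMeasure_iff_dist]
  intro δ hδ
  have hJ1R : (1 : ℝ) ≤ (J1 : ℝ) := by exact_mod_cast S.hJ1
  have hJ2R : (1 : ℝ) ≤ (J2 : ℝ) := by exact_mod_cast S.hJ2
  set T : ℝ := (J1 : ℝ) + 2 * (J2 : ℝ) with hTdef
  have hTpos : 0 < T := by rw [hTdef]; linarith
  set τ : ℝ := δ / (4 * T) with hτdef
  have hτpos : 0 < τ := div_pos hδ (by linarith)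
  -- uniform bounds via compactness
  have hC1ex : ∀ j : Fin J1, ∃ C, ∀ β ∈ S.B, ‖g1fn S j β‖ ≤ C ∧ ‖h1fn S j β‖ ≤ C := by
    intro j
    obtain ⟨Ca, hCa⟩ :=
      S.B_compact.exists_bound_of_continuousOn (g1fn_continuous S j).continuousOn
    obtain ⟨Cb, hCb⟩ :=
      S.B_compact.exists_bound_of_continuousOn (h1fn_continuous S j).continuousOn
    exact ⟨max Ca Cb, fun β hβ =>
      ⟨(hCa β hβ).trans (le_max_left _ _), (hCb β hβ).trans (le_max_right _ _)⟩⟩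
  choose C1 hC1 using hC1ex
  have hKcomp : ∀ j : Fin J2, IsCompact
      ((Metric.closedBall (0 : EuclideanSpace ℝ (Fin P)) (max S.bound ‖S.a2 j‖)) ×ˢ S.B) :=
    fun _ => (isCompact_closedBall _ _).prod S.B_compact
  have hC2ex : ∀ j : Fin J2, ∃ C, ∀ p ∈
      (Metric.closedBall (0 : EuclideanSpace ℝ (Fin P)) (max S.bound ‖S.a2 j‖)) ×ˢ S.B,
      ‖g2fn S j p‖ ≤ C ∧ ‖h2fn S j p‖ ≤ C := by
    intro j
    obtain ⟨Ca, hCa⟩ := (hKcomp j).exists_bound_of_continuousOn (g2fn_continuous S j).continuousOn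
    obtain ⟨Cb, hCb⟩ := (hKcomp j).exists_bound_of_continuousOn (h2fn_continuous S j).continuousOn
    exact ⟨max Ca Cb, fun p hp =>
      ⟨(hCa p hp).trans (le_max_left _ _), (hCb p hp).trans (le_max_right _ _)⟩⟩
  choose C2 hC2 using hC2ex
  set M : ℝ := 1 + (∑ j, |C1 j|) + (∑ j, |C2 j|) with hMdef
  have hsum1 : (0 : ℝ) ≤ ∑ j, |C1 j| := Finset.sum_nonneg fun _ _ => abs_nonneg _
  have hsum2 : (0 : ℝ) ≤ ∑ j, |C2 j| := Finset.sum_nonneg fun _ _ => abs_nonneg _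
  have hM1 : 1 ≤ M := by rw [hMdef]; linarith
  have hMpos : 0 < M := lt_of_lt_of_le one_pos hM1
  have hMC1 : ∀ j, C1 j ≤ M := by
    intro j
    have h2 : |C1 j| ≤ ∑ j', |C1 j'| :=
      Finset.single_le_sum (f := fun j' => |C1 j'|) (fun _ _ => abs_nonneg _) (Finset.mem_univ j)
    have h3 := le_abs_self (C1 j)
    rw [hMdef]; linarith
  have hMC2 : ∀ j, C2 j ≤ M := by
    intro j
    have h2 : |C2 j| ≤ ∑ j', |C2 j'| :=
      Finset.single_le_sum (f := fun j' => |C2 j'|) (fun _ _ => abs_nonneg _) (Finset.mem_univ j)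
    have h3 := le_abs_self (C2 j)
    rw [hMdef]; linarith
  have hτM : 0 < τ / M := div_pos hτpos hMpos
  -- uniform continuity of g2fn on the compact set
  have hucj : ∀ j : Fin J2, ∃ η > 0, ∀ x ∈
      (Metric.closedBall (0 : EuclideanSpace ℝ (Fin P)) (max S.bound ‖S.a2 j‖)) ×ˢ S.B, ∀ y ∈
      (Metric.closedBall (0 : EuclideanSpace ℝ (Fin P)) (max S.bound ‖S.a2 j‖)) ×ˢ S.B,
      dist x y < η → dist (g2fn S j x) (g2fn S j y) < τ / (S.α2 j + 1) := by
    intro j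
    have huc := (hKcomp j).uniformContinuousOn_of_continuous (g2fn_continuous S j).continuousOn
    exact Metric.uniformContinuousOn_iff.mp huc _ (div_pos hτpos (by linarith [S.α2_pos j]))
  choose η hηpos hη using hucj
  -- sample-size bounds
  have hn1le : ∀ n (j : Fin J1), S.n1 n j ≤ n := by
    intro n j
    have h := S.sum_sizes n
    have h2 : S.n1 n j ≤ ∑ j', S.n1 n j' :=
      Finset.single_le_sum (fun _ _ => Nat.zero_le _) (Finset.mem_univ j)
    omega
  have hn2le : ∀ n (j : Fin J2), S.n2 n j ≤ n := by
    intro n j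
    have h := S.sum_sizes n
    have h2 : S.n2 n j ≤ ∑ j', S.n2 n j' :=
      Finset.single_le_sum (fun _ _ => Nat.zero_le _) (Finset.mem_univ j)
    omega
  -- the bad events
  set Bad1 : Fin J1 → ℕ → Set Ω := fun j n =>
    {ω | τ / M ≤ (n : ℝ)⁻¹ * |∑ i ∈ Finset.range (S.n1 n j), S.ε1 j i ω|} with hBad1def
  set Bad2 : Fin J2 → ℕ → Set Ω := fun j n =>
    {ω | τ / M ≤ (n : ℝ)⁻¹ * |∑ i ∈ Finset.range (S.n2 n j), S.ε2n n j i ω|} with hBad2def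
  set BadA : Fin J2 → ℕ → Set Ω := fun j n =>
    {ω | η j ≤ dist (S.A2 n j ω) (S.a2 j)} with hBadAdef
  have hBad1lim : ∀ j, Tendsto (fun n => Pr (Bad1 j n)) atTop (𝓝 0) := by
    intro j
    exact lago_cheb (S.ε1 j) S.bound (S.meas_ε1 j) (S.ε1_bdd j) (S.ε1_mean j)
      (fun i k h => S.ε_indep.indepFun
        (show (Sum.inl (j, i) : (Fin J1 × ℕ) ⊕ (Fin J2 × ℕ)) ≠ Sum.inl (j, k) by simp [h]))
      (fun n => S.n1 n j) (fun n => hn1le n j) hτM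
  have hBad2lim : ∀ j, Tendsto (fun n => Pr (Bad2 j n)) atTop (𝓝 0) := by
    intro j
    have hcheb := lago_cheb (S.ε2 j) S.bound (S.meas_ε2 j) (S.ε2_bdd j) (S.ε2_mean j)
      (fun i k h => S.ε_indep.indepFun
        (show (Sum.inr (j, i) : (Fin J1 × ℕ) ⊕ (Fin J2 × ℕ)) ≠ Sum.inr (j, k) by simp [h]))
      (fun n => S.n2 n j) (fun n => hn2le n j) hτM
    have htrans : ∀ n : ℕ, Pr (Bad2 j n)
        = Pr {ω | τ / M ≤ (n : ℝ)⁻¹ * |∑ i ∈ Finset.range (S.n2 n j), S.ε2 j i ω|} := by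
      intro n
      exact lago_transfer S n
        (fun e => (n : ℝ)⁻¹ * |∑ i ∈ Finset.range (S.n2 n j), e (j, i)|)
        (measurable_const.mul
          ((Finset.measurable_sum _ fun i _ => measurable_pi_apply (j, i)).abs))
        (τ / M)
    exact (tendsto_congr htrans).mpr hcheb
  have hBadAlim : ∀ j, Tendsto (fun n => Pr (BadA j n)) atTop (𝓝 0) := by
    intro j
    exact tendstoInMeasure_iff_dist.mp (S.A2_tendsto j) (η j) (hηpos j)
  -- deterministic part
  have hdetlim : Tendsto (fun n : ℕ =>
      (∑ j, |(S.n1 n j : ℝ) / n - S.α1 j| * M)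
        + (∑ j, |(S.n2 n j : ℝ) / n - S.α2 j| * M)) atTop (𝓝 0) := by
    have h1 : ∀ j : Fin J1,
        Tendsto (fun n : ℕ => |(S.n1 n j : ℝ) / n - S.α1 j| * M) atTop (𝓝 0) := by
      intro j
      have := (((S.α1_lim j).sub (tendsto_const_nhds (x := S.α1 j))).abs).mul_const M
      simpa using this
    have h2 : ∀ j : Fin J2,
        Tendsto (fun n : ℕ => |(S.n2 n j : ℝ) / n - S.α2 j| * M) atTop (𝓝 0) := by
      intro j
      have := (((S.α2_lim j).sub (tendsto_const_nhds (x := S.α2 j))).abs).mul_const M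
      simpa using this
    have := (tendsto_finset_sum Finset.univ fun j _ => h1 j).add
      (tendsto_finset_sum Finset.univ fun j _ => h2 j)
    simpa using this
  have hdetev : ∀ᶠ n in atTop,
      (∑ j, |(S.n1 n j : ℝ) / n - S.α1 j| * M)
        + (∑ j, |(S.n2 n j : ℝ) / n - S.α2 j| * M) ≤ δ / 4 :=
    hdetlim.eventually (eventually_le_nhds (by positivity))
  -- the core estimate
  have hcore : ∀ᶠ n in atTop,
      Pr {ω | δ ≤ dist (sSup ((fun β => ‖S.U n β ω - S.uLim β‖) '' S.B)) (0 : ℝ)}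
        ≤ ((∑ j, Pr (Bad1 j n)) + (∑ j, Pr (Bad2 j n))) + (∑ j, Pr (BadA j n)) := by
    filter_upwards [hdetev] with n hdetn
    have hsub : {ω | δ ≤ dist (sSup ((fun β => ‖S.U n β ω - S.uLim β‖) '' S.B)) (0 : ℝ)}
        ⊆ ((⋃ j, Bad1 j n) ∪ (⋃ j, Bad2 j n)) ∪ (⋃ j, BadA j n) := by
      intro ω hω
      by_contra hcon
      simp only [Set.mem_union, Set.mem_iUnion, not_or, not_exists] at hcon
      obtain ⟨⟨hg1, hg2⟩, hg3⟩ := hcon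
      have hβbound : ∀ β ∈ S.B, ‖S.U n β ω - S.uLim β‖ ≤ δ / 2 := by
        intro β hβ
        have hdec := lago_U_decomp S n β ω
        have hstage1 : ∀ j : Fin J1,
            ‖((S.n1 n j : ℝ) / n - S.α1 j) • g1fn S j β
              + ((n : ℝ)⁻¹ * ∑ i ∈ Finset.range (S.n1 n j), S.ε1 j i ω) • h1fn S j β‖
            ≤ |(S.n1 n j : ℝ) / n - S.α1 j| * M + τ := by
          intro j
          have hb1 : ω ∉ Bad1 j n := hg1 j
          rw [hBad1def] at hb1
          simp only [Set.mem_setOf_eq, not_le] at hb1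
          have e1 : ‖((S.n1 n j : ℝ) / n - S.α1 j) • g1fn S j β‖
              ≤ |(S.n1 n j : ℝ) / n - S.α1 j| * M := by
            rw [norm_smul, Real.norm_eq_abs]
            exact mul_le_mul_of_nonneg_left ((hC1 j β hβ).1.trans (hMC1 j)) (abs_nonneg _)
          have e2 : ‖((n : ℝ)⁻¹ * ∑ i ∈ Finset.range (S.n1 n j), S.ε1 j i ω) • h1fn S j β‖
              ≤ τ := by
            rw [norm_smul, Real.norm_eq_abs, abs_mul, abs_inv, Nat.abs_cast]
            calc (n : ℝ)⁻¹ * |∑ i ∈ Finset.range (S.n1 n j), S.ε1 j i ω| * ‖h1fn S j β‖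
                ≤ (τ / M) * M :=
                  mul_le_mul hb1.le ((hC1 j β hβ).2.trans (hMC1 j)) (norm_nonneg _) hτM.le
            _ = τ := div_mul_cancel₀ _ (ne_of_gt hMpos)
          calc ‖((S.n1 n j : ℝ) / n - S.α1 j) • g1fn S j β
              + ((n : ℝ)⁻¹ * ∑ i ∈ Finset.range (S.n1 n j), S.ε1 j i ω) • h1fn S j β‖
              ≤ ‖((S.n1 n j : ℝ) / n - S.α1 j) • g1fn S j β‖
                + ‖((n : ℝ)⁻¹ * ∑ i ∈ Finset.range (S.n1 n j), S.ε1 j i ω) • h1fn S j β‖ :=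
                norm_add_le _ _
          _ ≤ |(S.n1 n j : ℝ) / n - S.α1 j| * M + τ := add_le_add e1 e2
        have hstage2 : ∀ j : Fin J2,
            ‖((S.n2 n j : ℝ) / n - S.α2 j) • g2fn S j (S.A2 n j ω, β)
              + S.α2 j • (g2fn S j (S.A2 n j ω, β) - g2fn S j (S.a2 j, β))
              + ((n : ℝ)⁻¹ * ∑ i ∈ Finset.range (S.n2 n j), S.ε2n n j i ω)
                  • h2fn S j (S.A2 n j ω, β)‖
            ≤ |(S.n2 n j : ℝ) / n - S.α2 j| * M + (τ + τ) := by
          intro j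
          have hb2 : ω ∉ Bad2 j n := hg2 j
          rw [hBad2def] at hb2
          simp only [Set.mem_setOf_eq, not_le] at hb2
          have hbA : ω ∉ BadA j n := hg3 j
          rw [hBadAdef] at hbA
          simp only [Set.mem_setOf_eq, not_le] at hbA
          have hmem1 : (S.A2 n j ω, β) ∈
              (Metric.closedBall (0 : EuclideanSpace ℝ (Fin P)) (max S.bound ‖S.a2 j‖)) ×ˢ S.B :=
            ⟨mem_closedBall_zero_iff.mpr ((S.A2_bdd n j ω).trans (le_max_left _ _)), hβ⟩
          have hmem2 : (S.a2 j, β) ∈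
              (Metric.closedBall (0 : EuclideanSpace ℝ (Fin P)) (max S.bound ‖S.a2 j‖)) ×ˢ S.B :=
            ⟨mem_closedBall_zero_iff.mpr (le_max_right _ _), hβ⟩
          have hdistp : dist ((S.A2 n j ω, β) :
              EuclideanSpace ℝ (Fin P) × EuclideanSpace ℝ (Fin (1 + P + Q))) (S.a2 j, β)
              < η j := by
            rw [Prod.dist_eq]
            simp only [dist_self]
            exact max_lt hbA (hηpos j)
          have hgd := hη j _ hmem1 _ hmem2 hdistp
          have e1 : ‖((S.n2 n j : ℝ) / n - S.α2 j) • g2fn S j (S.A2 n j ω, β)‖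
              ≤ |(S.n2 n j : ℝ) / n - S.α2 j| * M := by
            rw [norm_smul, Real.norm_eq_abs]
            exact mul_le_mul_of_nonneg_left ((hC2 j _ hmem1).1.trans (hMC2 j)) (abs_nonneg _)
          have e2 : ‖S.α2 j • (g2fn S j (S.A2 n j ω, β) - g2fn S j (S.a2 j, β))‖ ≤ τ := by
            rw [norm_smul, Real.norm_eq_abs, abs_of_pos (S.α2_pos j), ← dist_eq_norm]
            have h1 : S.α2 j * dist (g2fn S j (S.A2 n j ω, β)) (g2fn S j (S.a2 j, β))
                ≤ S.α2 j * (τ / (S.α2 j + 1)) :=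
              mul_le_mul_of_nonneg_left hgd.le (S.α2_pos j).le
            have hp : 0 < S.α2 j + 1 := by linarith [S.α2_pos j]
            have h2 : S.α2 j * (τ / (S.α2 j + 1)) ≤ τ := by
              rw [mul_comm, div_mul_eq_mul_div, div_le_iff₀ hp]
              nlinarith [S.α2_pos j, hτpos.le]
            linarith
          have e3 : ‖((n : ℝ)⁻¹ * ∑ i ∈ Finset.range (S.n2 n j), S.ε2n n j i ω)
              • h2fn S j (S.A2 n j ω, β)‖ ≤ τ := by
            rw [norm_smul, Real.norm_eq_abs, abs_mul, abs_inv, Nat.abs_cast]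
            calc (n : ℝ)⁻¹ * |∑ i ∈ Finset.range (S.n2 n j), S.ε2n n j i ω|
                  * ‖h2fn S j (S.A2 n j ω, β)‖
                ≤ (τ / M) * M :=
                  mul_le_mul hb2.le ((hC2 j _ hmem1).2.trans (hMC2 j)) (norm_nonneg _) hτM.le
            _ = τ := div_mul_cancel₀ _ (ne_of_gt hMpos)
          calc ‖((S.n2 n j : ℝ) / n - S.α2 j) • g2fn S j (S.A2 n j ω, β)
              + S.α2 j • (g2fn S j (S.A2 n j ω, β) - g2fn S j (S.a2 j, β))
              + ((n : ℝ)⁻¹ * ∑ i ∈ Finset.range (S.n2 n j), S.ε2n n j i ω)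
                  • h2fn S j (S.A2 n j ω, β)‖
              ≤ ‖((S.n2 n j : ℝ) / n - S.α2 j) • g2fn S j (S.A2 n j ω, β)
                  + S.α2 j • (g2fn S j (S.A2 n j ω, β) - g2fn S j (S.a2 j, β))‖
                + ‖((n : ℝ)⁻¹ * ∑ i ∈ Finset.range (S.n2 n j), S.ε2n n j i ω)
                    • h2fn S j (S.A2 n j ω, β)‖ := norm_add_le _ _
          _ ≤ (‖((S.n2 n j : ℝ) / n - S.α2 j) • g2fn S j (S.A2 n j ω, β)‖
                + ‖S.α2 j • (g2fn S j (S.A2 n j ω, β) - g2fn S j (S.a2 j, β))‖)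
                + ‖((n : ℝ)⁻¹ * ∑ i ∈ Finset.range (S.n2 n j), S.ε2n n j i ω)
                    • h2fn S j (S.A2 n j ω, β)‖ :=
              add_le_add_left (norm_add_le _ _) _
          _ ≤ (|(S.n2 n j : ℝ) / n - S.α2 j| * M + τ) + τ :=
              add_le_add (add_le_add e1 e2) e3
          _ = |(S.n2 n j : ℝ) / n - S.α2 j| * M + (τ + τ) := by ring
        rw [hdec]
        calc ‖(∑ j, (((S.n1 n j : ℝ) / n - S.α1 j) • g1fn S j β
              + ((n : ℝ)⁻¹ * ∑ i ∈ Finset.range (S.n1 n j), S.ε1 j i ω) • h1fn S j β))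
            + ∑ j, (((S.n2 n j : ℝ) / n - S.α2 j) • g2fn S j (S.A2 n j ω, β)
              + S.α2 j • (g2fn S j (S.A2 n j ω, β) - g2fn S j (S.a2 j, β))
              + ((n : ℝ)⁻¹ * ∑ i ∈ Finset.range (S.n2 n j), S.ε2n n j i ω)
                  • h2fn S j (S.A2 n j ω, β))‖
            ≤ (∑ j, (|(S.n1 n j : ℝ) / n - S.α1 j| * M + τ))
              + (∑ j, (|(S.n2 n j : ℝ) / n - S.α2 j| * M + (τ + τ))) := by
              refine (norm_add_le _ _).trans (add_le_add ?_ ?_)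
              · exact (norm_sum_le _ _).trans (Finset.sum_le_sum fun j _ => hstage1 j)
              · exact (norm_sum_le _ _).trans (Finset.sum_le_sum fun j _ => hstage2 j)
        _ = ((∑ j, |(S.n1 n j : ℝ) / n - S.α1 j| * M)
              + (∑ j, |(S.n2 n j : ℝ) / n - S.α2 j| * M))
            + ((J1 : ℝ) * τ + (J2 : ℝ) * (τ + τ)) := by
              rw [Finset.sum_add_distrib, Finset.sum_add_distrib, Finset.sum_const,
                Finset.sum_const, Finset.card_univ, Finset.card_univ, Fintype.card_fin,
                Fintype.card_fin, nsmul_eq_mul, nsmul_eq_mul]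
              ring
        _ ≤ δ / 4 + δ / 4 := by
              refine add_le_add hdetn (le_of_eq ?_)
              have hTne : T ≠ 0 := ne_of_gt hTpos
              rw [hτdef, hTdef] at *
              field_simp
              ring
        _ = δ / 2 := by ring
      have hsup_nonneg : 0 ≤ sSup ((fun β => ‖S.U n β ω - S.uLim β‖) '' S.B) := by
        refine Real.sSup_nonneg fun x hx => ?_
        obtain ⟨β, -, rfl⟩ := hx
        exact norm_nonneg _
      have hsup_le : sSup ((fun β => ‖S.U n β ω - S.uLim β‖) '' S.B) ≤ δ / 2 := by
        refine Real.sSup_le (fun x hx => ?_) (by linarith)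
        obtain ⟨β, hβ, rfl⟩ := hx
        exact hβbound β hβ
      have hω' : δ ≤ sSup ((fun β => ‖S.U n β ω - S.uLim β‖) '' S.B) := by
        have := hω
        simp only [Set.mem_setOf_eq, Real.dist_0_eq_abs, abs_of_nonneg hsup_nonneg] at this
        exact this
      linarith
    calc Pr {ω | δ ≤ dist (sSup ((fun β => ‖S.U n β ω - S.uLim β‖) '' S.B)) (0 : ℝ)}
        ≤ Pr (((⋃ j, Bad1 j n) ∪ (⋃ j, Bad2 j n)) ∪ (⋃ j, BadA j n)) := measure_mono hsub
    _ ≤ Pr ((⋃ j, Bad1 j n) ∪ (⋃ j, Bad2 j n)) + Pr (⋃ j, BadA j n) := measure_union_le _ _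
    _ ≤ (Pr (⋃ j, Bad1 j n) + Pr (⋃ j, Bad2 j n)) + Pr (⋃ j, BadA j n) :=
        add_le_add_left (measure_union_le _ _) _
    _ ≤ ((∑ j, Pr (Bad1 j n)) + (∑ j, Pr (Bad2 j n))) + (∑ j, Pr (BadA j n)) :=
        add_le_add (add_le_add (measure_iUnion_fintype_le _ _) (measure_iUnion_fintype_le _ _))
          (measure_iUnion_fintype_le _ _)
  have hlimit : Tendsto (fun n =>
      ((∑ j, Pr (Bad1 j n)) + (∑ j, Pr (Bad2 j n))) + (∑ j, Pr (BadA j n))) atTop (𝓝 0) := by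
    have := ((tendsto_finset_sum Finset.univ fun j _ => hBad1lim j).add
      (tendsto_finset_sum Finset.univ fun j _ => hBad2lim j)).add
      (tendsto_finset_sum Finset.univ fun j _ => hBadAlim j)
    simpa using this
  exact tendsto_of_tendsto_of_tendsto_of_le_of_le' tendsto_const_nhds hlimit
    (Eventually.of_forall fun n => zero_le) hcore

end
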